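/- Let m and c be positive integers and let v be the unique integer with 0 ≤ v < c and m ≡ −v (mod c). For each integer j with 1 ≤ j ≤ c−1 let w_j ∈ [0,1) be the fractional part of −mj/c, and let κ_{m,c} denote the number of integers j with 1 ≤ j ≤ c−1 such that w_1 + w_j ≥ 1. Then κ_{m,c} = v; that is, κ_{m,c} equals the residue of −m modulo c. -/

import Mathlib

lemma count_aux (n c : ℕ) (hc : 0 < c) (hn : n < c) :
    (((Finset.range c).filter (fun j => c ≤ n * j % c + n)).card : ℤ) = n := by
  have key : ∀ j, ((if c ≤ n * j % c + n then 1 else 0 : ℤ)) =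
      ((n * (j + 1) / c : ℕ) : ℤ) - ((n * j / c : ℕ) : ℤ) := by
    intro j
    have h1 : n * (j + 1) = c * (n * j / c) + (n * j % c + n) := by
      rw [mul_add, mul_one, ← Nat.add_assoc, Nat.div_add_mod]
    have h2 : n * (j + 1) / c = n * j / c + (n * j % c + n) / c := by
      rw [h1, Nat.mul_add_div hc]
    by_cases h : c ≤ n * j % c + n
    · have hlt : n * j % c + n < 2 * c := by
        have := Nat.mod_lt (n * j) hc; omega
      have : (n * j % c + n) / c = 1 := by
        rw [Nat.div_eq_sub_div hc h, Nat.div_eq_of_lt (by omega)]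
      rw [if_pos h, h2, this]
      push_cast; ring
    · have : (n * j % c + n) / c = 0 := Nat.div_eq_of_lt (by omega)
      rw [if_neg h, h2, this]
      push_cast; ring
  rw [Finset.card_filter]
  push_cast
  calc (∑ j ∈ Finset.range c, (if c ≤ n * j % c + n then 1 else 0 : ℤ))
      = ∑ j ∈ Finset.range c,
          (((n * (j + 1) / c : ℕ) : ℤ) - ((n * j / c : ℕ) : ℤ)) := by
        exact Finset.sum_congr rfl fun j _ => key j
    _ = ((n * c / c : ℕ) : ℤ) - ((n * 0 / c : ℕ) : ℤ) :=
        Finset.sum_range_sub (fun j => ((n * j / c : ℕ) : ℤ)) c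
    _ = n := by
        rw [Nat.mul_div_cancel _ hc]; simp

theorem kappa_eq_residue (m c : ℕ) (hm : 0 < m) (hc : 0 < c) (v : ℤ)
    (hv0 : 0 ≤ v) (hvc : v < (c : ℤ)) (hmv : (m : ℤ) ≡ -v [ZMOD (c : ℤ)])
    (w : ℕ → ℚ) (hw : ∀ j, w j = Int.fract (-((m : ℚ) * j) / c)) :
    ((((Finset.Icc 1 (c - 1)).filter (fun j => 1 ≤ w 1 + w j)).card : ℤ)) = v := by
  set n : ℕ := v.toNat with hn_def
  have hvn : (n : ℤ) = v := Int.toNat_of_nonneg hv0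
  have hn : n < c := by omega
  -- divisibility: c ∣ m + n
  have hdvd : c ∣ m + n := by
    have h1 : (c : ℤ) ∣ (-v) - (m : ℤ) := Int.ModEq.dvd hmv
    have h2 : (c : ℤ) ∣ ((m + n : ℕ) : ℤ) := by
      push_cast [hvn]
      have := dvd_neg.mpr h1
      rwa [neg_sub, sub_neg_eq_add] at this
    exact_mod_cast h2
  obtain ⟨K, hK⟩ := hdvd
  -- w j in terms of n
  have hwj : ∀ j : ℕ, w j = ((n * j % c : ℕ) : ℚ) / c := by
    intro j
    rw [hw]
    have : Int.fract (-((m : ℚ) * j) / c) = Int.fract (((n * j : ℕ) : ℚ) / c) := by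
      rw [Int.fract_eq_fract]
      refine ⟨-((K * j : ℕ) : ℤ), ?_⟩
      have hc' : (c : ℚ) ≠ 0 := by positivity
      have hKQ : (m : ℚ) + n = c * K := by exact_mod_cast congrArg (Nat.cast : ℕ → ℚ) hK
      push_cast
      rw [div_sub_div_same, show -((m : ℚ) * j) - n * j = -(((m : ℚ) + n) * j) by ring,
        hKQ, neg_div, mul_assoc, mul_div_cancel_left₀ _ hc']
    rw [this, Int.fract_div_natCast_eq_div_natCast_mod]
  -- condition rewriting
  have hcond : ∀ j : ℕ, (1 ≤ w 1 + w j) ↔ c ≤ n * j % c + n := by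
    intro j
    rw [hwj 1, hwj j]
    have hcQ : (0 : ℚ) < c := by positivity
    rw [← add_div, le_div_iff₀ hcQ, one_mul]
    rw [mul_one, Nat.mod_eq_of_lt hn]
    constructor
    · intro h
      have : (c : ℚ) ≤ ((n * j % c + n : ℕ) : ℚ) := by push_cast; linarith
      exact_mod_cast this
    · intro h
      have : (c : ℚ) ≤ ((n * j % c + n : ℕ) : ℚ) := by exact_mod_cast h
      push_cast at this; linarith
  have hfilter : (Finset.Icc 1 (c - 1)).filter (fun j => 1 ≤ w 1 + w j)
      = (Finset.range c).filter (fun j => c ≤ n * j % c + n) := by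
    ext j
    simp only [Finset.mem_filter, Finset.mem_Icc, Finset.mem_range, hcond]
    constructor
    · rintro ⟨⟨h1, h2⟩, h3⟩
      exact ⟨by omega, h3⟩
    · rintro ⟨h1, h2⟩
      have hj0 : j ≠ 0 := by
        rintro rfl
        simp at h2
        omega
      exact ⟨⟨by omega, by omega⟩, h2⟩
  rw [hfilter, count_aux n c hc hn, hvn]
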